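/- Suppose Col(D(μ)⁻¹ B(μ)) ⊆ Col(V) and Col((C(μ) D(μ)⁻¹)* H(μ)) ⊆ Col(W) (the subspace construction used when m ≤ p). Let v ∈ ℂ^m, w ∈ ℂ^p and σ > 0 satisfy H(μ) v = σ w and H(μ)* w = σ v (a pair of singular vectors of H(μ) with singular value σ). Then w* H′(μ) v = w* H̃′(μ) v. -/

import Mathlib

open Matrix

attribute [local instance] Matrix.normedAddCommGroup Matrix.normedSpace

section helpers
variable {α β γ : Type*} [Fintype α] [Fintype β] [Fintype γ] {μ : ℂ}

private theorem diff_entry' {f : ℂ → Matrix α β ℂ} (hf : DifferentiableAt ℂ f μ)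
    (i : α) (j : β) : DifferentiableAt ℂ (fun s => f s i j) μ :=
  differentiableAt_pi.mp (differentiableAt_pi.mp hf i) j

private theorem diff_of_entries' {f : ℂ → Matrix α β ℂ}
    (hf : ∀ i j, DifferentiableAt ℂ (fun s => f s i j) μ) :
    DifferentiableAt ℂ f μ :=
  differentiableAt_pi.mpr fun i => differentiableAt_pi.mpr (hf i)

private theorem diff_mul' {f : ℂ → Matrix α β ℂ} {g : ℂ → Matrix β γ ℂ}
    (hf : DifferentiableAt ℂ f μ) (hg : DifferentiableAt ℂ g μ) :
    DifferentiableAt ℂ (fun s => f s * g s) μ := by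
  apply diff_of_entries'
  intro i j
  have : (fun s => (f s * g s) i j) = fun s => ∑ l, f s i l * g s l j := by
    funext s; simp [Matrix.mul_apply]
  rw [this]
  exact DifferentiableAt.fun_sum fun l _ => (diff_entry' hf i l).mul (diff_entry' hg l j)

private theorem diff_mulVec' {f : ℂ → Matrix α β ℂ} {g : ℂ → β → ℂ}
    (hf : DifferentiableAt ℂ f μ) (hg : DifferentiableAt ℂ g μ) :
    DifferentiableAt ℂ (fun s => (f s).mulVec (g s)) μ := by
  apply differentiableAt_pi.mpr
  intro i
  have : (fun s => (f s).mulVec (g s) i) = fun s => ∑ j, f s i j * g s j := by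
    funext s; simp [Matrix.mulVec, dotProduct]
  rw [this]
  exact DifferentiableAt.fun_sum fun j _ =>
    (diff_entry' hf i j).mul (differentiableAt_pi.mp hg j)

private theorem diff_vecMul' {f : ℂ → Matrix α β ℂ} {g : ℂ → α → ℂ}
    (hf : DifferentiableAt ℂ f μ) (hg : DifferentiableAt ℂ g μ) :
    DifferentiableAt ℂ (fun s => Matrix.vecMul (g s) (f s)) μ := by
  apply differentiableAt_pi.mpr
  intro j
  have : (fun s => Matrix.vecMul (g s) (f s) j) = fun s => ∑ i, g s i * f s i j := by
    funext s; simp [Matrix.vecMul, dotProduct]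
  rw [this]
  exact DifferentiableAt.fun_sum fun i _ =>
    (differentiableAt_pi.mp hg i).mul (diff_entry' hf i j)

end helpers

section helpers2
variable {α : Type*} [Fintype α] [DecidableEq α] {μ : ℂ}

private theorem diff_finset_prod' {ι : Type*} (s : Finset ι) (f : ι → ℂ → ℂ)
    (h : ∀ i ∈ s, DifferentiableAt ℂ (f i) μ) :
    DifferentiableAt ℂ (fun x => ∏ i ∈ s, f i x) μ := by
  classical
  induction s using Finset.induction with
  | empty => simp
  | insert a t hni ih =>
    simp only [Finset.prod_insert hni]
    exact (h a (Finset.mem_insert_self a t)).mul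
      (ih fun i hi => h i (Finset.mem_insert_of_mem hi))

private theorem diff_det' {f : ℂ → Matrix α α ℂ} (hf : DifferentiableAt ℂ f μ) :
    DifferentiableAt ℂ (fun s => (f s).det) μ := by
  have : (fun s => (f s).det) =
      fun s => ∑ σ : Equiv.Perm α, (Equiv.Perm.sign σ : ℂ) * ∏ i, f s (σ i) i := by
    funext s; rw [Matrix.det_apply']
  rw [this]
  refine DifferentiableAt.fun_sum fun σ _ => DifferentiableAt.const_mul ?_ _
  exact diff_finset_prod' _ _ fun i _ => diff_entry' hf (σ i) i

private theorem diff_adjugate' {f : ℂ → Matrix α α ℂ} (hf : DifferentiableAt ℂ f μ) :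
    DifferentiableAt ℂ (fun s => (f s).adjugate) μ := by
  apply diff_of_entries'
  intro i j
  have : (fun s => (f s).adjugate i j)
      = fun s => ((f s).updateRow j (Pi.single i 1)).det := by
    funext s; rw [Matrix.adjugate_apply]
  rw [this]
  apply diff_det'
  apply diff_of_entries'
  intro i' j'
  by_cases h : i' = j
  · subst h; simp only [Matrix.updateRow_apply, if_pos rfl]
    exact differentiableAt_const _
  · simp only [Matrix.updateRow_apply, if_neg h]
    exact diff_entry' hf i' j'

private theorem diff_inv' {f : ℂ → Matrix α α ℂ} (hf : DifferentiableAt ℂ f μ)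
    (hu : IsUnit (f μ)) :
    DifferentiableAt ℂ (fun s => (f s)⁻¹) μ := by
  have : (fun s => (f s)⁻¹) = fun s => ((f s).det)⁻¹ • (f s).adjugate := by
    funext s; rw [Matrix.inv_def, Ring.inverse_eq_inv']
  rw [this]
  have hdet : (f μ).det ≠ 0 := ((Matrix.isUnit_iff_isUnit_det _).mp hu).ne_zero
  exact ((diff_det' hf).inv hdet).smul (diff_adjugate' hf)

end helpers2

/-- Hermite interpolation of the derivative in the direction of a singular pair,
for the subspace construction used when `m ≤ p`:
if `Col(D(μ)⁻¹ B(μ)) ⊆ Col(V)` and `Col((C(μ) D(μ)⁻¹)ᴴ H(μ)) ⊆ Col(W)`,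
and `H(μ) v = σ w`, `H(μ)ᴴ w = σ v` with `σ > 0`, then
`wᴴ H′(μ) v = wᴴ H̃′(μ) v`. -/
theorem singular_value_derivative_interpolation_m_le_p
    {n m p k : ℕ} (μ : ℂ)
    (B : ℂ → Matrix (Fin n) (Fin m) ℂ) (C : ℂ → Matrix (Fin p) (Fin n) ℂ)
    (D : ℂ → Matrix (Fin n) (Fin n) ℂ)
    (hB : DifferentiableAt ℂ B μ) (hC : DifferentiableAt ℂ C μ)
    (hD : DifferentiableAt ℂ D μ)
    (hDμ : IsUnit (D μ))
    (V W : Matrix (Fin n) (Fin k) ℂ)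
    (hWDV : IsUnit (Wᴴ * D μ * V))
    (hcolV : LinearMap.range ((D μ)⁻¹ * B μ).mulVecLin ≤ LinearMap.range V.mulVecLin)
    (hcolW : LinearMap.range ((C μ * (D μ)⁻¹)ᴴ * (C μ * (D μ)⁻¹ * B μ)).mulVecLin ≤
      LinearMap.range W.mulVecLin)
    (v : Fin m → ℂ) (w : Fin p → ℂ) (σ : ℝ) (hσ : 0 < σ)
    (hv : (C μ * (D μ)⁻¹ * B μ).mulVec v = (σ : ℂ) • w)
    (hw : (C μ * (D μ)⁻¹ * B μ)ᴴ.mulVec w = (σ : ℂ) • v) :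
    star w ⬝ᵥ (deriv (fun s => C s * (D s)⁻¹ * B s) μ).mulVec v =
      star w ⬝ᵥ (deriv (fun s => (C s * V) * (Wᴴ * D s * V)⁻¹ * (Wᴴ * B s)) μ).mulVec v := by
  classical
  -- abbreviations
  set K : ℂ → Matrix (Fin k) (Fin k) ℂ := fun s => Wᴴ * D s * V with hKdef
  set X : ℂ → Matrix (Fin n) (Fin n) ℂ := fun s => (D s)⁻¹ - V * (K s)⁻¹ * Wᴴ with hXdef
  have hdetD : IsUnit (D μ).det := (Matrix.isUnit_iff_isUnit_det _).mp hDμ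
  have hdetK : IsUnit (K μ).det := (Matrix.isUnit_iff_isUnit_det _).mp hWDV
  -- differentiability
  have hDinv : DifferentiableAt ℂ (fun s => (D s)⁻¹) μ := diff_inv' hD hDμ
  have hKd : DifferentiableAt ℂ K μ :=
    diff_mul' (diff_mul' (differentiableAt_const _) hD) (differentiableAt_const _)
  have hKinv : DifferentiableAt ℂ (fun s => (K s)⁻¹) μ := diff_inv' hKd hWDV
  have hXd : DifferentiableAt ℂ X μ :=
    hDinv.sub (diff_mul' (diff_mul' (differentiableAt_const _) hKinv)
      (differentiableAt_const _))
  have hHd : DifferentiableAt ℂ (fun s => C s * (D s)⁻¹ * B s) μ :=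
    diff_mul' (diff_mul' hC hDinv) hB
  have hGd : DifferentiableAt ℂ (fun s => (C s * V) * (K s)⁻¹ * (Wᴴ * B s)) μ :=
    diff_mul' (diff_mul' (diff_mul' hC (differentiableAt_const _)) hKinv)
      (diff_mul' (differentiableAt_const _) hB)
  -- the pairing linear map
  let φ : Matrix (Fin p) (Fin m) ℂ →ₗ[ℂ] ℂ :=
    { toFun := fun M => star w ⬝ᵥ M.mulVec v
      map_add' := by
        intro M N; simp [Matrix.add_mulVec, dotProduct_add]
      map_smul' := by
        intro c M; simp [Matrix.smul_mulVec] }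
  have hφ : ∀ M : Matrix (Fin p) (Fin m) ℂ, φ M = star w ⬝ᵥ M.mulVec v := fun _ => rfl
  have keyφ : ∀ (f : ℂ → Matrix (Fin p) (Fin m) ℂ), DifferentiableAt ℂ f μ →
      HasDerivAt (fun s => φ (f s)) (φ (deriv f μ)) μ := by
    intro f hf
    have := (LinearMap.toContinuousLinearMap φ).hasFDerivAt.comp_hasDerivAt μ hf.hasDerivAt
    exact this
  -- auxiliary vector functions
  set bv : ℂ → Fin n → ℂ := fun s => (X s * B s).mulVec v with hbvdef
  set av : ℂ → Fin n → ℂ := fun s => Matrix.vecMul (star w) (C s * X s) with havdef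
  set qv : ℂ → Fin n → ℂ := fun s => (D s).mulVec (bv s) with hqvdef
  have hbvd : DifferentiableAt ℂ bv μ :=
    diff_mulVec' (diff_mul' hXd hB) (differentiableAt_const _)
  have havd : DifferentiableAt ℂ av μ :=
    diff_vecMul' (diff_mul' hC hXd) (differentiableAt_const _)
  have hqvd : DifferentiableAt ℂ qv μ := diff_mulVec' hD hbvd
  -- key algebraic vanishing at μ
  have hXDV : X μ * D μ * V = 0 := by
    rw [hXdef]
    rw [Matrix.sub_mul, Matrix.sub_mul, Matrix.nonsing_inv_mul _ hdetD, Matrix.one_mul]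
    have : V * (K μ)⁻¹ * Wᴴ * D μ * V = V * ((K μ)⁻¹ * K μ) := by
      rw [hKdef]; simp only [Matrix.mul_assoc]
    rw [this, Matrix.nonsing_inv_mul _ hdetK, Matrix.mul_one, sub_self]
  have hWDX : Wᴴ * D μ * X μ = 0 := by
    rw [hXdef]
    rw [Matrix.mul_sub]
    have h1 : Wᴴ * D μ * (D μ)⁻¹ = Wᴴ := by
      rw [Matrix.mul_assoc, Matrix.mul_nonsing_inv _ hdetD, Matrix.mul_one]
    have h2 : Wᴴ * D μ * (V * (K μ)⁻¹ * Wᴴ) = K μ * (K μ)⁻¹ * Wᴴ := by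
      rw [hKdef]; simp only [Matrix.mul_assoc]
    rw [h1, h2, Matrix.mul_nonsing_inv _ hdetK, Matrix.one_mul, sub_self]
  have hbv0 : bv μ = 0 := by
    obtain ⟨y, hy⟩ := hcolV (LinearMap.mem_range_self _ v)
    rw [Matrix.mulVecLin_apply, Matrix.mulVecLin_apply] at hy
    have hBfact : B μ = D μ * ((D μ)⁻¹ * B μ) := by
      rw [← Matrix.mul_assoc, Matrix.mul_nonsing_inv _ hdetD, Matrix.one_mul]
    calc bv μ = (X μ * B μ).mulVec v := rfl
      _ = (X μ * D μ * ((D μ)⁻¹ * B μ)).mulVec v := by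
          rw [Matrix.mul_assoc, ← hBfact]
      _ = (X μ * D μ).mulVec (((D μ)⁻¹ * B μ).mulVec v) := by
          rw [Matrix.mulVec_mulVec]
      _ = (X μ * D μ).mulVec (V.mulVec y) := by rw [← hy]
      _ = (X μ * D μ * V).mulVec y := by rw [Matrix.mulVec_mulVec]
      _ = 0 := by rw [hXDV, Matrix.zero_mulVec]
  have hqv0 : qv μ = 0 := by
    rw [hqvdef]; simp only [hbv0, Matrix.mulVec_zero]
  have hav0 : av μ = 0 := by
    obtain ⟨z, hz⟩ := hcolW (LinearMap.mem_range_self _ v)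
    rw [Matrix.mulVecLin_apply, Matrix.mulVecLin_apply] at hz
    have hσne : (σ : ℂ) ≠ 0 := by
      simp only [ne_eq, Complex.ofReal_eq_zero]
      exact ne_of_gt hσ
    have hz' : (C μ * (D μ)⁻¹)ᴴ.mulVec w = W.mulVec ((σ : ℂ)⁻¹ • z) := by
      have h1 : ((C μ * (D μ)⁻¹)ᴴ * (C μ * (D μ)⁻¹ * B μ)).mulVec v
          = (σ : ℂ) • (C μ * (D μ)⁻¹)ᴴ.mulVec w := by
        rw [← Matrix.mulVec_mulVec, hv, Matrix.mulVec_smul]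
      rw [h1] at hz
      rw [Matrix.mulVec_smul, hz, smul_smul, inv_mul_cancel₀ hσne, one_smul]
    have hCfact : C μ * X μ = (C μ * (D μ)⁻¹) * (D μ * X μ) := by
      rw [← Matrix.mul_assoc, Matrix.mul_assoc (C μ), Matrix.nonsing_inv_mul _ hdetD,
        Matrix.mul_one]
    have hrow : Matrix.vecMul (star w) (C μ * (D μ)⁻¹)
        = Matrix.vecMul (star ((σ : ℂ)⁻¹ • z)) Wᴴ := by
      have e1 : star ((C μ * (D μ)⁻¹)ᴴ.mulVec w)
          = Matrix.vecMul (star w) (C μ * (D μ)⁻¹) := by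
        rw [Matrix.star_mulVec, Matrix.conjTranspose_conjTranspose]
      rw [← e1, hz', Matrix.star_mulVec]
    calc av μ = Matrix.vecMul (star w) (C μ * X μ) := rfl
      _ = Matrix.vecMul (star w) ((C μ * (D μ)⁻¹) * (D μ * X μ)) := by rw [hCfact]
      _ = Matrix.vecMul (Matrix.vecMul (star w) (C μ * (D μ)⁻¹)) (D μ * X μ) := by
          rw [Matrix.vecMul_vecMul]
      _ = Matrix.vecMul (Matrix.vecMul (star ((σ : ℂ)⁻¹ • z)) Wᴴ) (D μ * X μ) := by
          rw [hrow]
      _ = Matrix.vecMul (star ((σ : ℂ)⁻¹ • z)) (Wᴴ * D μ * X μ) := by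
          rw [Matrix.vecMul_vecMul, Matrix.mul_assoc]
      _ = 0 := by rw [hWDX, Matrix.vecMul_zero]
  -- the scalar function g has derivative 0
  set g : ℂ → ℂ := fun s => av s ⬝ᵥ qv s with hgdef
  have hg0 : HasDerivAt g 0 μ := by
    have hterm : ∀ i : Fin n, HasDerivAt (fun s => av s i * qv s i) 0 μ := by
      intro i
      have h1 := (differentiableAt_pi.mp havd i).hasDerivAt
      have h2 := (differentiableAt_pi.mp hqvd i).hasDerivAt
      have := h1.fun_mul h2
      simpa [show av μ i = 0 from congrFun hav0 i,
        show qv μ i = 0 from congrFun hqv0 i] using this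
    have hsum := HasDerivAt.fun_sum (u := (Finset.univ : Finset (Fin n)))
      (fun i _ => hterm i)
    have : g = fun s => ∑ i, av s i * qv s i := by
      funext s; rw [hgdef]; simp [dotProduct]
    rw [this]
    simpa using hsum
  -- eventual equality near μ
  have hDev : ∀ᶠ s in nhds μ, (D s).det ≠ 0 :=
    (diff_det' hD).continuousAt.eventually_ne hdetD.ne_zero
  have hKev : ∀ᶠ s in nhds μ, (K s).det ≠ 0 :=
    (diff_det' hKd).continuousAt.eventually_ne hdetK.ne_zero
  have heq : (fun s => φ (C s * (D s)⁻¹ * B s) - φ ((C s * V) * (K s)⁻¹ * (Wᴴ * B s)))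
      =ᶠ[nhds μ] g := by
    filter_upwards [hDev, hKev] with s hDs hKs
    have hDs' : IsUnit (D s).det := isUnit_iff_ne_zero.mpr hDs
    have hKs' : IsUnit (K s).det := isUnit_iff_ne_zero.mpr hKs
    have hXDVs : X s * D s * V = 0 := by
      rw [hXdef]
      rw [Matrix.sub_mul, Matrix.sub_mul, Matrix.nonsing_inv_mul _ hDs', Matrix.one_mul]
      have : V * (K s)⁻¹ * Wᴴ * D s * V = V * ((K s)⁻¹ * K s) := by
        rw [hKdef]; simp only [Matrix.mul_assoc]
      rw [this, Matrix.nonsing_inv_mul _ hKs', Matrix.mul_one, sub_self]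
    have hXDX : X s * D s * X s = X s := by
      conv_lhs => rw [hXdef]
      rw [Matrix.mul_sub]
      have h1 : X s * D s * (D s)⁻¹ = X s := by
        rw [Matrix.mul_assoc, Matrix.mul_nonsing_inv _ hDs', Matrix.mul_one]
      have h2 : X s * D s * (V * (K s)⁻¹ * Wᴴ) = (X s * D s * V) * ((K s)⁻¹ * Wᴴ) := by
        simp only [Matrix.mul_assoc]
      rw [h1, h2, hXDVs, Matrix.zero_mul, sub_zero]
    have hid : C s * (D s)⁻¹ * B s - (C s * V) * (K s)⁻¹ * (Wᴴ * B s)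
        = (C s * X s) * D s * (X s * B s) := by
      have e1 : (C s * X s) * D s * (X s * B s) = C s * (X s * D s * X s) * B s := by
        simp only [Matrix.mul_assoc]
      rw [e1, hXDX, hXdef]
      rw [Matrix.mul_sub, Matrix.sub_mul]
      congr 1
      simp only [Matrix.mul_assoc]
    show φ _ - φ _ = g s
    rw [← map_sub, hid, hφ, hgdef]
    simp only [havdef, hqvdef, hbvdef]
    rw [← Matrix.mulVec_mulVec, ← Matrix.mulVec_mulVec, Matrix.dotProduct_mulVec]
  -- conclude
  have h1 := keyφ _ hHd
  have h2 := keyφ _ hGd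
  have hsub := h1.sub h2
  have hzero : HasDerivAt
      (fun s => φ (C s * (D s)⁻¹ * B s) - φ ((C s * V) * (K s)⁻¹ * (Wᴴ * B s))) 0 μ :=
    hg0.congr_of_eventuallyEq heq
  have := hsub.unique hzero
  have hfin : φ (deriv (fun s => C s * (D s)⁻¹ * B s) μ)
      = φ (deriv (fun s => (C s * V) * (K s)⁻¹ * (Wᴴ * B s)) μ) :=
    sub_eq_zero.mp this
  exact hfin
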